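/- Let n ≥ 1 and let p_1,…,p_n ∈ [0,1] with Σ_{i=1}^n p_i > 0. Then ||PB(p_1,…,p_n) − Poisson(Σ_{i=1}^n p_i)|| ≤ (Σ_{i=1}^n p_i²)/(Σ_{i=1}^n p_i). -/

import Mathlib

open Finset

/-- The Poisson binomial distribution: the law of the sum of independent Bernoulli
random variables indexed by `A` with expectations `p i`. -/
noncomputable def PB {ι : Type*} [DecidableEq ι] (A : Finset ι) (p : ι → ℝ) (m : ℕ) : ℝ :=
  ∑ T ∈ A.powerset.filter (fun T => T.card = m), (∏ i ∈ T, p i) * ∏ i ∈ A \ T, (1 - p i)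

/-- Total variation distance between two distributions on `ℕ`. -/
noncomputable def tvDist (P Q : ℕ → ℝ) : ℝ := (1 / 2) * ∑' m : ℕ, |P m - Q m|

/-- The Poisson distribution with parameter `lam`. -/
noncomputable def poissonPMF (lam : ℝ) (i : ℕ) : ℝ :=
  Real.exp (-lam) * lam ^ i / (Nat.factorial i)

namespace SteinChen

/-- Partial sums of the exponential series: `∑_{i<k} l^i/i!`. -/
noncomputable def Fr (l : ℝ) (k : ℕ) : ℝ := ∑ i ∈ Finset.range k, l ^ i / (Nat.factorial i)

lemma summable_exp_series (l : ℝ) : Summable (fun i : ℕ => l ^ i / (Nat.factorial i)) :=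
  Real.summable_pow_div_factorial l

lemma exp_eq_tsum (l : ℝ) : Real.exp l = ∑' i : ℕ, l ^ i / (Nat.factorial i) := by
  rw [Real.exp_eq_exp_ℝ, NormedSpace.exp_eq_tsum_div]

lemma tail_eq (l : ℝ) (k : ℕ) :
    Real.exp l - Fr l k = ∑' i : ℕ, l ^ (i + k) / (Nat.factorial (i + k)) := by
  have h := Summable.sum_add_tsum_nat_add (f := fun i : ℕ => l ^ i / (Nat.factorial i)) k
    (summable_exp_series l)
  rw [exp_eq_tsum l, Fr, ← h]
  ring

lemma summable_tail (l : ℝ) (k : ℕ) :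
    Summable (fun i : ℕ => l ^ (i + k) / (Nat.factorial (i + k))) :=
  (summable_nat_add_iff k).2 (summable_exp_series l)

lemma Fr_nonneg {l : ℝ} (hl : 0 ≤ l) (k : ℕ) : 0 ≤ Fr l k := by
  apply Finset.sum_nonneg
  intro i _
  positivity

lemma tail_nonneg {l : ℝ} (hl : 0 ≤ l) (k : ℕ) : 0 ≤ Real.exp l - Fr l k := by
  rw [tail_eq]
  apply tsum_nonneg
  intro i
  positivity

lemma Fr_le_exp {l : ℝ} (hl : 0 ≤ l) (k : ℕ) : Fr l k ≤ Real.exp l :=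
  sub_nonneg.mp (tail_nonneg hl k)

lemma Fr_succ (l : ℝ) (k : ℕ) : Fr l (k + 1) = Fr l k + l ^ k / (Nat.factorial k) := by
  rw [Fr, Fr, Finset.sum_range_succ]

/-- Key inequality: `l · Fr l w ≤ w · Fr l (w+1)`. -/
lemma key_ineq {l : ℝ} (hl : 0 ≤ l) (w : ℕ) : l * Fr l w ≤ (w : ℝ) * Fr l (w + 1) := by
  have h1 : l * Fr l w = ∑ i ∈ Finset.range w, l ^ (i+1) / (Nat.factorial i) := by
    rw [Fr, Finset.mul_sum]
    apply Finset.sum_congr rfl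
    intro i _
    rw [pow_succ]
    ring
  have h2 : (w : ℝ) * Fr l (w + 1)
      = (∑ i ∈ Finset.range w, (w : ℝ) * (l ^ (i+1) / (Nat.factorial (i+1))))
        + (w : ℝ) * (l ^ 0 / (Nat.factorial 0)) := by
    rw [Fr, Finset.mul_sum, Finset.sum_range_succ']
  rw [h1, h2]
  have hterm : ∀ i ∈ Finset.range w,
      l ^ (i+1) / (Nat.factorial i) ≤ (w : ℝ) * (l ^ (i+1) / (Nat.factorial (i+1))) := by
    intro i hi
    rw [Finset.mem_range] at hi
    have hfac : (Nat.factorial (i+1) : ℝ) = ((i:ℝ)+1) * (Nat.factorial i) := by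
      rw [Nat.factorial_succ]; push_cast; ring
    have hip : (0:ℝ) < (i:ℝ) + 1 := by positivity
    have heq : (w : ℝ) * (l ^ (i+1) / (((i:ℝ)+1) * (Nat.factorial i)))
        = ((w:ℝ)/((i:ℝ)+1)) * (l ^ (i+1) / (Nat.factorial i)) := by
      field_simp
    rw [hfac, heq]
    have h1 : (1:ℝ) ≤ (w:ℝ)/((i:ℝ)+1) := by
      rw [le_div_iff₀ hip, one_mul]
      have : (i:ℝ) + 1 ≤ (w:ℝ) := by exact_mod_cast hi
      linarith
    have h2 : (0:ℝ) ≤ l ^ (i+1) / (Nat.factorial i) := by positivity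
    nlinarith
  have := Finset.sum_le_sum hterm
  have hnn : 0 ≤ (w : ℝ) * (l ^ 0 / (Nat.factorial 0)) := by positivity
  linarith

/-- Tail inequality: `w · (e^l − Fr l (w+1)) ≤ l · (e^l − Fr l w)`. -/
lemma tail_ineq {l : ℝ} (hl : 0 ≤ l) (w : ℕ) :
    (w : ℝ) * (Real.exp l - Fr l (w + 1)) ≤ l * (Real.exp l - Fr l w) := by
  rw [tail_eq, tail_eq, ← tsum_mul_left, ← tsum_mul_left]
  apply Summable.tsum_le_tsum _ ((summable_tail l (w+1)).mul_left _) ((summable_tail l w).mul_left _)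
  intro i
  have h1 : i + (w + 1) = (i + w) + 1 := by ring
  rw [h1]
  set q := i + w with hq
  have hqw : (w : ℝ) ≤ (q : ℝ) + 1 := by
    have : w ≤ q + 1 := by omega
    exact_mod_cast this
  have hfac : (Nat.factorial (q+1) : ℝ) = ((q:ℝ)+1) * (Nat.factorial q) := by
    rw [Nat.factorial_succ]; push_cast; ring
  have hl' : l * (l ^ q / (Nat.factorial q)) = l ^ (q+1) / (Nat.factorial q) := by
    rw [pow_succ]; ring
  rw [hl', hfac, div_mul_eq_div_div_swap]
  set a := l ^ (q+1) / (Nat.factorial q : ℝ) with ha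
  have ha0 : 0 ≤ a := by positivity
  have hqp : (0:ℝ) < (q:ℝ) + 1 := by positivity
  have : (w:ℝ) * (a / ((q:ℝ)+1)) = ((w:ℝ) * a) / ((q:ℝ)+1) := by ring
  rw [this, div_le_iff₀ hqp]
  nlinarith

/-- The Stein solution for the singleton `{j}`. -/
noncomputable def g (l : ℝ) (j k : ℕ) : ℝ :=
  if k = 0 then 0 else
    ((Nat.factorial (k-1) : ℝ) / l ^ k) * (l ^ j / (Nat.factorial j)) * Real.exp (-l) *
      (if j < k then Real.exp l - Fr l k else - Fr l k)

lemma g_succ (l : ℝ) (j k : ℕ) :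
    g l j (k+1) = ((Nat.factorial k : ℝ) / l ^ (k+1)) * (l ^ j / (Nat.factorial j)) *
      Real.exp (-l) * (if j < k+1 then Real.exp l - Fr l (k+1) else - Fr l (k+1)) := by
  simp [g]

/-- The Stein equation: `l·g(j,k+1) − k·g(j,k) = 1_{j=k} − π_j`. -/
lemma stein_eq {l : ℝ} (hl : 0 < l) (j k : ℕ) :
    l * g l j (k+1) - (k : ℝ) * g l j k
      = (if j = k then 1 else 0) - Real.exp (-l) * l ^ j / (Nat.factorial j) := by
  have hl0 : l ≠ 0 := ne_of_gt hl
  have hexp : Real.exp (-l) * Real.exp l = 1 := by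
    rw [← Real.exp_add]; simp
  rcases k with _ | k
  · -- k = 0
    rw [g_succ]
    simp only [Nat.cast_zero, zero_mul, sub_zero]
    have hFr1 : Fr l 1 = 1 := by simp [Fr]
    rcases Nat.eq_zero_or_pos j with hj | hj
    · subst hj
      simp only [if_pos (Nat.zero_lt_one), hFr1]
      simp [Nat.factorial]
      field_simp
      nlinarith [hexp]
    · have hj1 : ¬ (j < 1) := by omega
      simp only [if_neg hj1, hFr1]
      have : (j = 0) = False := by simp; omega
      rw [if_neg (by omega)]
      simp [Nat.factorial]
      field_simp
  · -- k = k+1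
    rw [g_succ, g_succ]
    have hfac : (Nat.factorial (k+1) : ℝ) = ((k:ℝ)+1) * (Nat.factorial k) := by
      rw [Nat.factorial_succ]; push_cast; ring
    have hFrs : Fr l (k+2) = Fr l (k+1) + l^(k+1) / (Nat.factorial (k+1)) := Fr_succ l (k+1)
    have hfacne : (Nat.factorial k : ℝ) ≠ 0 := by
      exact_mod_cast Nat.factorial_ne_zero k
    have hfacne' : (Nat.factorial (k+1) : ℝ) ≠ 0 := by
      exact_mod_cast Nat.factorial_ne_zero (k+1)
    have hfacjne : (Nat.factorial j : ℝ) ≠ 0 := by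
      exact_mod_cast Nat.factorial_ne_zero j
    rcases lt_trichotomy j (k+1) with hj | hj | hj
    · rw [if_pos (by omega), if_pos (by omega), if_neg (by omega)]
      rw [hFrs, hfac]
      push_cast
      field_simp
      ring
    · subst hj
      rw [if_pos (by omega), if_neg (by omega), if_pos rfl]
      have hE : Real.exp l = 1 / Real.exp (-l) := by
        field_simp
        linarith [hexp]
      rw [hFrs, hfac, hE]
      have hene : Real.exp (-l) ≠ 0 := Real.exp_ne_zero _
      push_cast
      field_simp
      ring
    · rw [if_neg (by omega), if_neg (by omega), if_neg (by omega)]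
      rw [hFrs, hfac]
      push_cast
      field_simp
      ring

/-- Monotonicity: for `m ≠ v+1`, `g l m (v+2) ≤ g l m (v+1)`. -/
lemma g_mono {l : ℝ} (hl : 0 < l) {m v : ℕ} (hm : m ≠ v + 1) :
    g l m (v + 2) ≤ g l m (v + 1) := by
  have hl0 : l ≠ 0 := ne_of_gt hl
  have hc : 0 ≤ l ^ m / (Nat.factorial m) * Real.exp (-l) := by positivity
  rw [g_succ, g_succ]
  rcases lt_or_gt_of_ne hm with h | h
  · -- m < v + 1 : both in positive-tail branch
    rw [if_pos (by omega), if_pos (by omega)]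
    have key := tail_ineq (le_of_lt hl) (v + 1)
    -- (v+1) * (E - Fr (v+2)) ≤ l * (E - Fr (v+1))
    have h1 : ((Nat.factorial (v+1) : ℝ) / l ^ (v+2)) * (Real.exp l - Fr l (v+2))
        ≤ ((Nat.factorial v : ℝ) / l ^ (v+1)) * (Real.exp l - Fr l (v+1)) := by
      have hfac : (Nat.factorial (v+1) : ℝ) = ((v:ℝ)+1) * (Nat.factorial v) := by
        rw [Nat.factorial_succ]; push_cast; ring
      have e1 : ((Nat.factorial (v+1) : ℝ) / l ^ (v+2)) * (Real.exp l - Fr l (v+2))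
          = ((Nat.factorial v : ℝ) / l ^ (v+2)) * (((v:ℝ)+1) * (Real.exp l - Fr l (v+2))) := by
        rw [hfac]; ring
      have e2 : ((Nat.factorial v : ℝ) / l ^ (v+1)) * (Real.exp l - Fr l (v+1))
          = ((Nat.factorial v : ℝ) / l ^ (v+2)) * (l * (Real.exp l - Fr l (v+1))) := by
        rw [pow_succ]
        field_simp
        ring
      rw [e1, e2]
      apply mul_le_mul_of_nonneg_left _ (by positivity)
      have : ((v:ℝ)+1) = ((v+1 : ℕ) : ℝ) := by push_cast; ring
      rw [this]
      exact key
    calc ((Nat.factorial (v+1) : ℝ) / l ^ (v+2)) * (l ^ m / (Nat.factorial m)) *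
          Real.exp (-l) * (Real.exp l - Fr l (v+2))
        = (l ^ m / (Nat.factorial m) * Real.exp (-l)) *
            (((Nat.factorial (v+1) : ℝ) / l ^ (v+2)) * (Real.exp l - Fr l (v+2))) := by ring
      _ ≤ (l ^ m / (Nat.factorial m) * Real.exp (-l)) *
            (((Nat.factorial v : ℝ) / l ^ (v+1)) * (Real.exp l - Fr l (v+1))) := by
          exact mul_le_mul_of_nonneg_left h1 hc
      _ = ((Nat.factorial v : ℝ) / l ^ (v+1)) * (l ^ m / (Nat.factorial m)) *
            Real.exp (-l) * (Real.exp l - Fr l (v+1)) := by ring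
  · -- m > v + 1 : both in negative branch
    rw [if_neg (by omega), if_neg (by omega)]
    have key := key_ineq (le_of_lt hl) (v + 1)
    -- l * Fr (v+1) ≤ (v+1) * Fr (v+2)
    have h1 : ((Nat.factorial v : ℝ) / l ^ (v+1)) * Fr l (v+1)
        ≤ ((Nat.factorial (v+1) : ℝ) / l ^ (v+2)) * Fr l (v+2) := by
      have hfac : (Nat.factorial (v+1) : ℝ) = ((v:ℝ)+1) * (Nat.factorial v) := by
        rw [Nat.factorial_succ]; push_cast; ring
      have e1 : ((Nat.factorial (v+1) : ℝ) / l ^ (v+2)) * Fr l (v+2)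
          = ((Nat.factorial v : ℝ) / l ^ (v+2)) * (((v:ℝ)+1) * Fr l (v+2)) := by
        rw [hfac]; ring
      have e2 : ((Nat.factorial v : ℝ) / l ^ (v+1)) * Fr l (v+1)
          = ((Nat.factorial v : ℝ) / l ^ (v+2)) * (l * Fr l (v+1)) := by
        rw [pow_succ]
        field_simp
        ring
      rw [e1, e2]
      apply mul_le_mul_of_nonneg_left _ (by positivity)
      have : ((v:ℝ)+1) = ((v+1 : ℕ) : ℝ) := by push_cast; ring
      rw [this]
      exact key
    calc ((Nat.factorial (v+1) : ℝ) / l ^ (v+2)) * (l ^ m / (Nat.factorial m)) *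
          Real.exp (-l) * (- Fr l (v+2))
        = -((l ^ m / (Nat.factorial m) * Real.exp (-l)) *
            (((Nat.factorial (v+1) : ℝ) / l ^ (v+2)) * Fr l (v+2))) := by ring
      _ ≤ -((l ^ m / (Nat.factorial m) * Real.exp (-l)) *
            (((Nat.factorial v : ℝ) / l ^ (v+1)) * Fr l (v+1))) := by
          apply neg_le_neg
          exact mul_le_mul_of_nonneg_left h1 hc
      _ = ((Nat.factorial v : ℝ) / l ^ (v+1)) * (l ^ m / (Nat.factorial m)) *
            Real.exp (-l) * (- Fr l (v+1)) := by ring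

/-- The diagonal increment is nonnegative. -/
lemma g_delta_nonneg {l : ℝ} (hl : 0 < l) (v : ℕ) :
    0 ≤ g l (v+1) (v + 2) - g l (v+1) (v + 1) := by
  rw [g_succ, g_succ, if_pos (by omega), if_neg (by omega)]
  have h1 : 0 ≤ Real.exp l - Fr l (v+2) := tail_nonneg (le_of_lt hl) (v+2)
  have h2 : 0 ≤ Fr l (v+1) := Fr_nonneg (le_of_lt hl) (v+1)
  have e1 : (0:ℝ) ≤ ((Nat.factorial (v+1) : ℝ) / l ^ (v+2)) * (l ^ (v+1) / (Nat.factorial (v+1))) *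
      Real.exp (-l) * (Real.exp l - Fr l (v+2)) := by positivity
  have e2 : ((Nat.factorial v : ℝ) / l ^ (v+1)) * (l ^ (v+1) / (Nat.factorial (v+1))) *
      Real.exp (-l) * (- Fr l (v+1)) ≤ 0 := by
    have : (0:ℝ) ≤ ((Nat.factorial v : ℝ) / l ^ (v+1)) * (l ^ (v+1) / (Nat.factorial (v+1))) *
        Real.exp (-l) * Fr l (v+1) := by positivity
    linarith
  linarith

/-- The diagonal increment is at most `1/l`. -/
lemma g_delta_le {l : ℝ} (hl : 0 < l) (v : ℕ) :
    g l (v+1) (v + 2) - g l (v+1) (v + 1) ≤ 1 / l := by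
  have hl0 : l ≠ 0 := ne_of_gt hl
  rw [g_succ, g_succ, if_pos (by omega), if_neg (by omega)]
  have hfacne : (Nat.factorial (v+1) : ℝ) ≠ 0 := by
    exact_mod_cast Nat.factorial_ne_zero (v+1)
  have e1 : ((Nat.factorial (v+1) : ℝ) / l ^ (v+2)) * (l ^ (v+1) / (Nat.factorial (v+1))) *
      Real.exp (-l) * (Real.exp l - Fr l (v+2))
      = Real.exp (-l) * ((Real.exp l - Fr l (v+2)) / l) := by
    rw [pow_succ]
    field_simp
  have hfac : (Nat.factorial (v+1) : ℝ) = ((v:ℝ)+1) * (Nat.factorial v) := by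
    rw [Nat.factorial_succ]; push_cast; ring
  have e2 : ((Nat.factorial v : ℝ) / l ^ (v+1)) * (l ^ (v+1) / (Nat.factorial (v+1))) *
      Real.exp (-l) * (- Fr l (v+1))
      = - (Real.exp (-l) * (Fr l (v+1) / ((v:ℝ)+1))) := by
    rw [hfac]
    have hvne : ((v:ℝ)+1) ≠ 0 := by positivity
    have hfvne : (Nat.factorial v : ℝ) ≠ 0 := by exact_mod_cast Nat.factorial_ne_zero v
    field_simp
  rw [e1, e2]
  have key := key_ineq (le_of_lt hl) (v + 1)
  -- l * Fr (v+1) ≤ (v+1) * Fr (v+2)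
  have hv1 : (0:ℝ) < (v:ℝ) + 1 := by positivity
  have h2 : Fr l (v+1) / ((v:ℝ)+1) ≤ Fr l (v+2) / l := by
    rw [div_le_div_iff₀ hv1 hl]
    have : ((v+1 : ℕ) : ℝ) = (v:ℝ)+1 := by push_cast; ring
    rw [← this]
    linarith [key]
  have hexp : Real.exp (-l) * Real.exp l = 1 := by
    rw [← Real.exp_add]; simp
  have hposexp : 0 < Real.exp (-l) := Real.exp_pos _
  calc Real.exp (-l) * ((Real.exp l - Fr l (v+2)) / l)
        - -(Real.exp (-l) * (Fr l (v+1) / ((v:ℝ)+1)))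
      = Real.exp (-l) * ((Real.exp l - Fr l (v+2)) / l + Fr l (v+1) / ((v:ℝ)+1)) := by ring
    _ ≤ Real.exp (-l) * ((Real.exp l - Fr l (v+2)) / l + Fr l (v+2) / l) := by
        apply mul_le_mul_of_nonneg_left _ (le_of_lt hposexp)
        linarith
    _ = Real.exp (-l) * (Real.exp l / l) := by
        field_simp
        ring
    _ = 1 / l := by rw [← mul_div_assoc, hexp]

lemma g_eq (l : ℝ) (v m : ℕ) :
    g l m (v+1) = ((Nat.factorial v : ℝ) / l ^ (v+1) * Real.exp (-l)) *
      ((l ^ m / (Nat.factorial m)) *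
        (if m < v+1 then Real.exp l - Fr l (v+1) else - Fr l (v+1))) := by
  rw [g_succ]
  ring

lemma summable_g {l : ℝ} (hl : 0 < l) (v : ℕ) : Summable (fun m => g l m (v+1)) := by
  set D := (Nat.factorial v : ℝ) / l ^ (v+1) * Real.exp (-l) with hDdef
  have hD : 0 ≤ D := by positivity
  have hb : Summable (fun m : ℕ => (D * Real.exp l) * (l ^ m / (Nat.factorial m))) :=
    (summable_exp_series l).mul_left _
  apply Summable.of_abs
  apply Summable.of_nonneg_of_le (fun m => abs_nonneg _) _ hb
  intro m
  have hmn : (0:ℝ) ≤ l ^ m / (Nat.factorial m) := by positivity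
  have h3 : |(if m < v+1 then Real.exp l - Fr l (v+1) else - Fr l (v+1))| ≤ Real.exp l := by
    split
    · rw [abs_of_nonneg (tail_nonneg (le_of_lt hl) (v+1))]
      have := Fr_nonneg (le_of_lt hl) (v+1)
      linarith
    · rw [abs_neg, abs_of_nonneg (Fr_nonneg (le_of_lt hl) (v+1))]
      exact Fr_le_exp (le_of_lt hl) (v+1)
  rw [g_eq, abs_mul, abs_of_nonneg hD, abs_mul, abs_of_nonneg hmn]
  calc D * (l ^ m / (Nat.factorial m) *
        |if m < v+1 then Real.exp l - Fr l (v+1) else - Fr l (v+1)|)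
      ≤ D * (l ^ m / (Nat.factorial m) * Real.exp l) := by
        apply mul_le_mul_of_nonneg_left _ hD
        exact mul_le_mul_of_nonneg_left h3 hmn
    _ = (D * Real.exp l) * (l ^ m / (Nat.factorial m)) := by ring

lemma tsum_g_eq_zero {l : ℝ} (hl : 0 < l) (v : ℕ) : ∑' m, g l m (v+1) = 0 := by
  have hsum : Summable (fun m : ℕ => (l ^ m / (Nat.factorial m : ℝ)) *
      (if m < v+1 then Real.exp l - Fr l (v+1) else - Fr l (v+1))) := by
    have := (summable_g hl v)
    have hD : ((Nat.factorial v : ℝ) / l ^ (v+1) * Real.exp (-l)) ≠ 0 := by positivity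
    have := this.mul_left (((Nat.factorial v : ℝ) / l ^ (v+1) * Real.exp (-l)))⁻¹
    apply this.congr
    intro m
    rw [g_eq, ← mul_assoc, inv_mul_cancel₀ hD, one_mul]
  have key : ∑' m : ℕ, (l ^ m / (Nat.factorial m : ℝ)) *
      (if m < v+1 then Real.exp l - Fr l (v+1) else - Fr l (v+1)) = 0 := by
    rw [← Summable.sum_add_tsum_nat_add (v+1) hsum]
    have h1 : ∑ m ∈ Finset.range (v+1), (l ^ m / (Nat.factorial m : ℝ)) *
        (if m < v+1 then Real.exp l - Fr l (v+1) else - Fr l (v+1))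
        = Fr l (v+1) * (Real.exp l - Fr l (v+1)) := by
      rw [Fr, Finset.sum_mul]
      apply Finset.sum_congr rfl
      intro m hm
      rw [Finset.mem_range] at hm
      rw [if_pos hm]
    have h2 : ∑' m : ℕ, (l ^ (m + (v+1)) / (Nat.factorial (m + (v+1)) : ℝ)) *
        (if m + (v+1) < v+1 then Real.exp l - Fr l (v+1) else - Fr l (v+1))
        = - ((Real.exp l - Fr l (v+1)) * Fr l (v+1)) := by
      have : ∀ m : ℕ, (l ^ (m + (v+1)) / (Nat.factorial (m + (v+1)) : ℝ)) *
          (if m + (v+1) < v+1 then Real.exp l - Fr l (v+1) else - Fr l (v+1))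
          = (l ^ (m + (v+1)) / (Nat.factorial (m + (v+1)) : ℝ)) * (- Fr l (v+1)) := by
        intro m
        rw [if_neg (by omega)]
      rw [tsum_congr this, tsum_mul_right, ← tail_eq]
      ring
    rw [h1, h2]
    ring
  calc ∑' m, g l m (v+1)
      = ∑' m : ℕ, ((Nat.factorial v : ℝ) / l ^ (v+1) * Real.exp (-l)) *
        ((l ^ m / (Nat.factorial m)) *
          (if m < v+1 then Real.exp l - Fr l (v+1) else - Fr l (v+1))) := by
        exact tsum_congr (g_eq l v)
    _ = 0 := by rw [tsum_mul_left, key, mul_zero]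

lemma summable_delta {l : ℝ} (hl : 0 < l) (v : ℕ) :
    Summable (fun m => g l m (v+2) - g l m (v+1)) :=
  (summable_g hl (v+1)).sub (summable_g hl v)

lemma tsum_delta_zero {l : ℝ} (hl : 0 < l) (v : ℕ) :
    ∑' m, (g l m (v+2) - g l m (v+1)) = 0 := by
  rw [Summable.tsum_sub (summable_g hl (v+1)) (summable_g hl v), tsum_g_eq_zero hl (v+1),
    tsum_g_eq_zero hl v, sub_zero]

lemma summable_abs_delta {l : ℝ} (hl : 0 < l) (v : ℕ) :
    Summable (fun m => |g l m (v+2) - g l m (v+1)|) :=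
  (summable_delta hl v).abs

/-- The crucial bound: `∑_m |Δg_m(v+1)| ≤ 2/l`. -/
lemma tsum_abs_delta_le {l : ℝ} (hl : 0 < l) (v : ℕ) :
    ∑' m, |g l m (v+2) - g l m (v+1)| ≤ 2 / l := by
  set D : ℕ → ℝ := fun m => g l m (v+2) - g l m (v+1) with hD
  have habs : ∀ m, |D m| = 2 * max (D m) 0 - D m := by
    intro m
    rcases le_or_gt 0 (D m) with h | h
    · rw [abs_of_nonneg h, max_eq_left h]; ring
    · rw [abs_of_neg h, max_eq_right (le_of_lt h)]; ring
  have hmax : (fun m => max (D m) 0) = fun m => if m = v+1 then D (v+1) else 0 := by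
    funext m
    by_cases hm : m = v+1
    · subst hm
      rw [if_pos rfl, max_eq_left (g_delta_nonneg hl v)]
    · rw [if_neg hm, max_eq_right]
      have := g_mono hl (m := m) (v := v) hm
      simp only [hD]
      linarith
  have hsmax : Summable (fun m => max (D m) 0) := by
    rw [hmax]
    exact (hasSum_ite_eq (v+1) (D (v+1))).summable
  have htsmax : ∑' m, max (D m) 0 = D (v+1) := by
    rw [hmax]
    exact tsum_ite_eq (v+1) (fun _ => D (v+1))
  calc ∑' m, |D m|
      = ∑' m, (2 * max (D m) 0 - D m) := tsum_congr habs
    _ = 2 * (∑' m, max (D m) 0) - ∑' m, D m := by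
        rw [Summable.tsum_sub ((hsmax.mul_left 2)) (summable_delta hl v), tsum_mul_left]
    _ = 2 * D (v+1) := by rw [htsmax, tsum_delta_zero hl v]; ring
    _ ≤ 2 * (1 / l) := by
        have := g_delta_le hl v
        have h2 : D (v+1) ≤ 1/l := this
        linarith
    _ = 2 / l := by ring

section Combinatorics

variable {ι : Type*} [DecidableEq ι]

/-- The weight of an outcome `T` (set of successes) among indices `A`. -/
noncomputable def PW (p : ι → ℝ) (A T : Finset ι) : ℝ :=
  (∏ i ∈ T, p i) * ∏ i ∈ A \ T, (1 - p i)

lemma PW_nonneg {p : ι → ℝ} (hp : ∀ i, 0 ≤ p i ∧ p i ≤ 1) (A T : Finset ι) :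
    0 ≤ PW p A T := by
  apply mul_nonneg
  · exact Finset.prod_nonneg fun i _ => (hp i).1
  · exact Finset.prod_nonneg fun i _ => by linarith [(hp i).2]

lemma sum_PW (p : ι → ℝ) (A : Finset ι) : ∑ T ∈ A.powerset, PW p A T = 1 := by
  have := Finset.prod_add p (fun i => 1 - p i) A
  simp only [PW]
  rw [← this]
  simp

/-- Splitting the expectation at an index `i ∈ A`. -/
lemma sum_split (p : ι → ℝ) {A : Finset ι} {i : ι} (hi : i ∈ A) (Φ : Finset ι → ℝ) :
    ∑ T ∈ A.powerset, PW p A T * Φ T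
    = ∑ S ∈ (A.erase i).powerset,
        PW p (A.erase i) S * ((1 - p i) * Φ S + p i * Φ (insert i S)) := by
  have hA : insert i (A.erase i) = A := Finset.insert_erase hi
  have hnotmem : i ∉ A.erase i := Finset.notMem_erase i A
  rw [← hA, Finset.sum_powerset_insert hnotmem, Finset.erase_insert hnotmem]
  rw [← Finset.sum_add_distrib]
  apply Finset.sum_congr rfl
  intro S hS
  rw [Finset.mem_powerset] at hS
  have hiS : i ∉ S := fun h => hnotmem (hS h)
  have h1 : PW p (insert i (A.erase i)) S = (1 - p i) * PW p (A.erase i) S := by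
    rw [PW, PW]
    have : insert i (A.erase i) \ S = insert i ((A.erase i) \ S) := by
      rw [Finset.insert_sdiff_of_notMem _ hiS]
    rw [this, Finset.prod_insert (fun h => hnotmem (Finset.mem_sdiff.mp h).1)]
    ring
  have h2 : PW p (insert i (A.erase i)) (insert i S) = p i * PW p (A.erase i) S := by
    rw [PW, PW]
    have hd : insert i (A.erase i) \ insert i S = (A.erase i) \ S := by
      ext x
      simp only [Finset.mem_sdiff, Finset.mem_insert, not_or]
      constructor
      · rintro ⟨h1 | h1, h2, h3⟩
        · exact absurd h1 h2
        · exact ⟨h1, h3⟩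
      · rintro ⟨h1, h2⟩
        exact ⟨Or.inr h1, fun h => hnotmem (h ▸ h1), h2⟩
    rw [hd, Finset.prod_insert hiS]
    ring
  rw [h1, h2]
  ring

lemma card_eq_indicator_sum {A T : Finset ι} (hT : T ⊆ A) :
    (T.card : ℝ) = ∑ i ∈ A, (if i ∈ T then (1:ℝ) else 0) := by
  rw [Finset.sum_ite_mem A T (fun _ => (1:ℝ)), Finset.inter_eq_right.mpr hT]
  simp

/-- The Stein expectation identity. -/
lemma expectation_identity (p : ι → ℝ) (A : Finset ι) (φ : ℕ → ℝ) :
    ∑ T ∈ A.powerset, PW p A T *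
        ((∑ i ∈ A, p i) * φ (T.card + 1) - (T.card : ℝ) * φ T.card)
    = ∑ i ∈ A, p i ^ 2 * ∑ S ∈ (A.erase i).powerset,
        PW p (A.erase i) S * (φ (S.card + 2) - φ (S.card + 1)) := by
  have step1 : ∑ T ∈ A.powerset, PW p A T *
        ((∑ i ∈ A, p i) * φ (T.card + 1) - (T.card : ℝ) * φ T.card)
      = ∑ i ∈ A, ∑ T ∈ A.powerset,
          PW p A T * (p i * φ (T.card + 1) - (if i ∈ T then φ T.card else 0)) := by
    rw [Finset.sum_comm]
    apply Finset.sum_congr rfl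
    intro T hT
    rw [Finset.mem_powerset] at hT
    rw [← Finset.mul_sum]
    congr 1
    rw [Finset.sum_sub_distrib, ← Finset.sum_mul]
    congr 1
    rw [card_eq_indicator_sum hT, Finset.sum_mul]
    apply Finset.sum_congr rfl
    intro x _
    split <;> simp
  rw [step1]
  apply Finset.sum_congr rfl
  intro i hi
  have e1 : ∑ T ∈ A.powerset, PW p A T * (p i * φ (T.card + 1) - (if i ∈ T then φ T.card else 0))
      = ∑ S ∈ (A.erase i).powerset, PW p (A.erase i) S *
          ((1 - p i) * (p i * φ (S.card + 1) - 0)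
            + p i * (p i * φ ((insert i S).card + 1) - φ (insert i S).card)) := by
    rw [sum_split p hi (fun T => p i * φ (T.card + 1) - (if i ∈ T then φ T.card else 0))]
    apply Finset.sum_congr rfl
    intro S hS
    rw [Finset.mem_powerset] at hS
    have hiS : i ∉ S := fun h => (Finset.notMem_erase i A) (hS h)
    rw [if_neg hiS, if_pos (Finset.mem_insert_self i S)]
  rw [e1, Finset.mul_sum]
  apply Finset.sum_congr rfl
  intro S hS
  rw [Finset.mem_powerset] at hS
  have hiS : i ∉ S := fun h => (Finset.notMem_erase i A) (hS h)
  rw [Finset.card_insert_of_notMem hiS]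
  ring

end Combinatorics

/-- The pointwise Stein–Chen identity. -/
lemma key_pointwise {ι : Type*} [DecidableEq ι] {p : ι → ℝ} (A : Finset ι)
    (hl : 0 < ∑ i ∈ A, p i) (m : ℕ) :
    PB A p m - poissonPMF (∑ i ∈ A, p i) m
    = ∑ i ∈ A, p i ^ 2 * ∑ S ∈ (A.erase i).powerset,
        PW p (A.erase i) S *
          (g (∑ i ∈ A, p i) m (S.card + 2) - g (∑ i ∈ A, p i) m (S.card + 1)) := by
  set l := ∑ i ∈ A, p i with hldef
  have h1 : PB A p m - poissonPMF l m
      = ∑ T ∈ A.powerset, PW p A T * ((if T.card = m then 1 else 0) - poissonPMF l m) := by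
    have e1 : PB A p m = ∑ T ∈ A.powerset, (if T.card = m then PW p A T else 0) := by
      rw [PB, Finset.sum_filter]
      rfl
    have e2 : ∑ T ∈ A.powerset, PW p A T * ((if T.card = m then 1 else 0) - poissonPMF l m)
        = ∑ T ∈ A.powerset, ((if T.card = m then PW p A T else 0) - PW p A T * poissonPMF l m) := by
      apply Finset.sum_congr rfl
      intro T _
      split <;> ring
    rw [e1, e2, Finset.sum_sub_distrib, ← Finset.sum_mul, sum_PW, one_mul]
  have h2 : ∀ T ∈ A.powerset, PW p A T * ((if T.card = m then 1 else 0) - poissonPMF l m)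
      = PW p A T * (l * g l m (T.card + 1) - (T.card : ℝ) * g l m T.card) := by
    intro T _
    congr 1
    have hite : (if T.card = m then (1:ℝ) else 0) = (if m = T.card then 1 else 0) := by
      simp [eq_comm]
    rw [hite, stein_eq hl m T.card, poissonPMF]
  rw [h1, Finset.sum_congr rfl h2]
  have := expectation_identity p A (g l m)
  rw [← hldef] at this
  exact this

end SteinChen

open SteinChen in
/-- Poisson approximation to the Poisson binomial distribution:
`||PB(p) − Poisson(∑ pᵢ)|| ≤ (∑ pᵢ²)/(∑ pᵢ)`. -/
theorem pb_poisson_approx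
    (n : ℕ) (hn : 1 ≤ n) (p : Fin n → ℝ)
    (hp : ∀ i, p i ∈ Set.Icc (0 : ℝ) 1)
    (hpos : 0 < ∑ i, p i) :
    tvDist (PB Finset.univ p) (poissonPMF (∑ i, p i)) ≤ (∑ i, (p i) ^ 2) / (∑ i, p i) := by
  classical
  set l : ℝ := ∑ i, p i with hldef
  have hp' : ∀ i, 0 ≤ p i ∧ p i ≤ 1 := fun i => ⟨(hp i).1, (hp i).2⟩
  set A : Finset (Fin n) := Finset.univ with hA
  -- the bounding function
  set c : Fin n → Finset (Fin n) → ℝ :=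
    fun i S => p i ^ 2 * PW p (A.erase i) S with hc
  have hcnn : ∀ i S, 0 ≤ c i S := fun i S =>
    mul_nonneg (sq_nonneg _) (PW_nonneg hp' _ _)
  set B : ℕ → ℝ := fun m => ∑ i ∈ A, ∑ S ∈ (A.erase i).powerset,
      c i S * |g l m (S.card + 2) - g l m (S.card + 1)| with hB
  -- pointwise bound
  have hpoint : ∀ m, |PB A p m - poissonPMF l m| ≤ B m := by
    intro m
    rw [key_pointwise A hpos m, ← hldef]
    calc |∑ i ∈ A, p i ^ 2 * ∑ S ∈ (A.erase i).powerset,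
          PW p (A.erase i) S * (g l m (S.card + 2) - g l m (S.card + 1))|
        ≤ ∑ i ∈ A, |p i ^ 2 * ∑ S ∈ (A.erase i).powerset,
            PW p (A.erase i) S * (g l m (S.card + 2) - g l m (S.card + 1))| :=
          Finset.abs_sum_le_sum_abs _ _
      _ ≤ B m := by
          apply Finset.sum_le_sum
          intro i _
          rw [abs_mul, abs_of_nonneg (sq_nonneg (p i))]
          calc p i ^ 2 * |∑ S ∈ (A.erase i).powerset,
                PW p (A.erase i) S * (g l m (S.card + 2) - g l m (S.card + 1))|
              ≤ p i ^ 2 * ∑ S ∈ (A.erase i).powerset,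
                  PW p (A.erase i) S * |g l m (S.card + 2) - g l m (S.card + 1)| := by
                apply mul_le_mul_of_nonneg_left _ (sq_nonneg _)
                calc |∑ S ∈ (A.erase i).powerset,
                      PW p (A.erase i) S * (g l m (S.card + 2) - g l m (S.card + 1))|
                    ≤ ∑ S ∈ (A.erase i).powerset,
                        |PW p (A.erase i) S * (g l m (S.card + 2) - g l m (S.card + 1))| :=
                      Finset.abs_sum_le_sum_abs _ _
                  _ = ∑ S ∈ (A.erase i).powerset,
                        PW p (A.erase i) S * |g l m (S.card + 2) - g l m (S.card + 1)| := by
                      apply Finset.sum_congr rfl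
                      intro S _
                      rw [abs_mul, abs_of_nonneg (PW_nonneg hp' _ _)]
          _ = ∑ S ∈ (A.erase i).powerset,
                c i S * |g l m (S.card + 2) - g l m (S.card + 1)| := by
              rw [Finset.mul_sum]
              apply Finset.sum_congr rfl
              intro S _
              rw [hc]
              ring
  -- summability of each component
  have hcomp : ∀ i ∈ A, ∀ S ∈ (A.erase i).powerset,
      Summable (fun m => c i S * |g l m (S.card + 2) - g l m (S.card + 1)|) := by
    intro i _ S _
    exact (summable_abs_delta hpos S.card).mul_left _
  have hBsum : Summable B := by
    rw [hB]
    apply summable_sum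
    intro i hi
    apply summable_sum
    intro S hS
    exact hcomp i hi S hS
  have hLsum : Summable (fun m => |PB A p m - poissonPMF l m|) :=
    Summable.of_nonneg_of_le (fun m => abs_nonneg _) hpoint hBsum
  -- compute the tsum of B
  have hBtsum : ∑' m, B m ≤ (2 / l) * ∑ i, p i ^ 2 := by
    rw [hB]
    rw [Summable.tsum_finsetSum (fun i hi => summable_sum (fun S hS => hcomp i hi S hS))]
    have hinner : ∀ i ∈ A, ∑' m, ∑ S ∈ (A.erase i).powerset,
        c i S * |g l m (S.card + 2) - g l m (S.card + 1)| ≤ p i ^ 2 * (2 / l) := by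
      intro i hi
      rw [Summable.tsum_finsetSum (fun S hS => hcomp i hi S hS)]
      calc ∑ S ∈ (A.erase i).powerset,
            ∑' m, c i S * |g l m (S.card + 2) - g l m (S.card + 1)|
          = ∑ S ∈ (A.erase i).powerset,
              c i S * ∑' m, |g l m (S.card + 2) - g l m (S.card + 1)| := by
            apply Finset.sum_congr rfl
            intro S _
            rw [tsum_mul_left]
        _ ≤ ∑ S ∈ (A.erase i).powerset, c i S * (2 / l) := by
            apply Finset.sum_le_sum
            intro S _
            exact mul_le_mul_of_nonneg_left (tsum_abs_delta_le hpos S.card) (hcnn i S)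
        _ = p i ^ 2 * (2 / l) := by
            rw [← Finset.sum_mul]
            congr 1
            rw [hc]
            simp only
            rw [← Finset.mul_sum, sum_PW, mul_one]
    calc ∑ i ∈ A, ∑' m, ∑ S ∈ (A.erase i).powerset,
          c i S * |g l m (S.card + 2) - g l m (S.card + 1)|
        ≤ ∑ i ∈ A, p i ^ 2 * (2 / l) := Finset.sum_le_sum hinner
      _ = (2 / l) * ∑ i, p i ^ 2 := by rw [← Finset.sum_mul]; ring
  -- conclude
  have htv : ∑' m, |PB A p m - poissonPMF l m| ≤ (2 / l) * ∑ i, p i ^ 2 :=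
    le_trans (Summable.tsum_le_tsum hpoint hLsum hBsum) hBtsum
  rw [tvDist]
  calc (1/2) * ∑' m, |PB A p m - poissonPMF l m|
      ≤ (1/2) * ((2 / l) * ∑ i, p i ^ 2) := by
        apply mul_le_mul_of_nonneg_left htv (by norm_num)
    _ = (∑ i, p i ^ 2) / l := by
        field_simp
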